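/- Let Γ be a compact connected (closed) curve in ℝ^N with finite total curvature. Then Γ has finite length; quantitatively, c_N · Length(Γ) ≤ diam(Γ) · TotalCurvature(Γ) where c_N > 0 is a constant depending only on N. (It suffices to prove the statement for closed curves: the total variation of t ↦ γ(t)·u is at most diam(Γ) times the number of local extrema of γ(t)·u, and one averages over unit vectors u using the Crofton and Milnor formulas.) -/

import Mathlib

open Set Filter


/-- Sum of exterior angles of the inscribed polygon with vertices `γ (t 0), …, γ (t (n+1))`,
the angles being taken at the `n` interior vertices. -/
noncomputable def polySum {E : Type*} [NormedAddCommGroup E] [InnerProductSpace ℝ E]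
    (γ : ℝ → E) {n : ℕ} (t : Fin (n + 2) → ℝ) : ℝ :=
  ∑ i : Fin n, InnerProductGeometry.angle
    (γ (t i.castSucc.succ) - γ (t i.castSucc.castSucc))
    (γ (t i.succ.succ) - γ (t i.castSucc.succ))

/-- The set of angle–sums of polygons inscribed in `γ` with vertices in `s`. -/
def polySums {E : Type*} [NormedAddCommGroup E] [InnerProductSpace ℝ E]
    (γ : ℝ → E) (s : Set ℝ) : Set ℝ :=
  {A | ∃ (n : ℕ) (t : Fin (n + 2) → ℝ), StrictMono t ∧ (∀ i, t i ∈ s) ∧ A = polySum γ t}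

/-- Total curvature of `γ` on the parameter set `s` : the supremum of the angle sums
of inscribed polygons with vertices in `s`. -/
noncomputable def totalCurvatureOn {E : Type*} [NormedAddCommGroup E] [InnerProductSpace ℝ E]
    (γ : ℝ → E) (s : Set ℝ) : ℝ :=
  sSup (polySums γ s)

/-- Cyclic angle sum for a closed (period-one) curve: vertices `γ (t 0), …, γ (t n)` within one
period, the chords taken cyclically (`Fin (n+1)` addition wraps around). -/
noncomputable def closedPolySum {E : Type*} [NormedAddCommGroup E] [InnerProductSpace ℝ E]
    (γ : ℝ → E) {n : ℕ} (t : Fin (n + 1) → ℝ) : ℝ :=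
  ∑ i : Fin (n + 1), InnerProductGeometry.angle
    (γ (t (i + 1)) - γ (t i)) (γ (t (i + 1 + 1)) - γ (t (i + 1)))

/-- Angle sums of closed polygons inscribed in a period-one closed curve `γ`. -/
def closedPolySums {E : Type*} [NormedAddCommGroup E] [InnerProductSpace ℝ E]
    (γ : ℝ → E) : Set ℝ :=
  {A | ∃ (n : ℕ) (t : Fin (n + 1) → ℝ), StrictMono t ∧ t (Fin.last n) < t 0 + 1 ∧
    A = closedPolySum γ t}

/-- Total curvature of a closed (period-one) curve. -/
noncomputable def closedTotalCurvature {E : Type*} [NormedAddCommGroup E]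
    [InnerProductSpace ℝ E] (γ : ℝ → E) : ℝ :=
  sSup (closedPolySums γ)

section AuxLemmas
open InnerProductGeometry RealInnerProductSpace Finset
variable {V : Type*} [NormedAddCommGroup V] [InnerProductSpace ℝ V]

/-- Triangle inequality for angles between unit vectors. -/
private lemma my_angle_triangle_unit {x y z : V} (hx : ‖x‖ = 1) (hy : ‖y‖ = 1) (hz : ‖z‖ = 1) :
    angle x z ≤ angle x y + angle y z := by
  set a := angle x y with ha
  set b := angle y z with hb
  have ha0 : 0 ≤ a := angle_nonneg _ _
  have hb0 : 0 ≤ b := angle_nonneg _ _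
  by_cases hab : Real.pi ≤ a + b
  · exact (angle_le_pi x z).trans hab
  push_neg at hab
  set α : ℝ := ⟪x, y⟫ with hα
  set β : ℝ := ⟪y, z⟫ with hβ
  have hyy : (⟪y, y⟫ : ℝ) = 1 := by
    rw [real_inner_self_eq_norm_mul_norm, hy]; norm_num
  have hca : Real.cos a = α := by rw [ha, cos_angle, hx, hy]; simp [hα]
  have hcb : Real.cos b = β := by rw [hb, cos_angle, hy, hz]; simp [hβ]
  have hsa : Real.sin a = Real.sqrt (1 - α * α) := by
    have := sin_angle_mul_norm_mul_norm x y
    rw [hx, hy, real_inner_self_eq_norm_mul_norm, real_inner_self_eq_norm_mul_norm, hx, hy]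
      at this
    simpa [hα] using this
  have hsb : Real.sin b = Real.sqrt (1 - β * β) := by
    have := sin_angle_mul_norm_mul_norm y z
    rw [hy, hz, real_inner_self_eq_norm_mul_norm, real_inner_self_eq_norm_mul_norm, hy, hz]
      at this
    simpa [hβ] using this
  have key : Real.cos (a + b) ≤ Real.cos (angle x z) := by
    rw [Real.cos_add]
    have hcz : Real.cos (angle x z) = ⟪x, z⟫ := by rw [cos_angle, hx, hz]; norm_num
    have e1 : ⟪x - α • y, z - β • y⟫ = ⟪x, z⟫ - α * β := by
      simp only [inner_sub_left, inner_sub_right, real_inner_smul_left, real_inner_smul_right,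
        hyy]
      have h1 : (⟪x, y⟫ : ℝ) = α := rfl
      have h2 : (⟪y, z⟫ : ℝ) = β := rfl
      rw [h1, h2]; ring
    have e2 : ‖x - α • y‖ ^ 2 = 1 - α * α := by
      have h1 : (⟪x, α • y⟫ : ℝ) = α * α := by
        rw [real_inner_smul_right]
      rw [norm_sub_sq_real, h1, norm_smul, hx, hy]
      simp [Real.norm_eq_abs, mul_pow, sq_abs]
      try ring
    have e3 : ‖z - β • y‖ ^ 2 = 1 - β * β := by
      have h1 : (⟪z, β • y⟫ : ℝ) = β * β := by
        rw [real_inner_smul_right]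
        congr 1
        exact (real_inner_comm z y).symm
      rw [norm_sub_sq_real, h1, norm_smul, hz, hy]
      simp [Real.norm_eq_abs, mul_pow, sq_abs]
      try ring
    have hxn : ‖x - α • y‖ = Real.sqrt (1 - α * α) := by
      rw [← e2, Real.sqrt_sq (norm_nonneg _)]
    have hzn : ‖z - β • y‖ = Real.sqrt (1 - β * β) := by
      rw [← e3, Real.sqrt_sq (norm_nonneg _)]
    have CS : -(‖x - α • y‖ * ‖z - β • y‖) ≤ ⟪x - α • y, z - β • y⟫ :=
      neg_le_of_abs_le (abs_real_inner_le_norm _ _)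
    rw [e1, hxn, hzn] at CS
    rw [hca, hcb, hcz, hsa, hsb]
    linarith
  by_contra hcon
  push_neg at hcon
  have := Real.cos_lt_cos_of_nonneg_of_le_pi (by linarith : (0:ℝ) ≤ a + b)
    (angle_le_pi x z) hcon
  linarith

/-- Triangle inequality for angles, all vectors. -/
lemma my_angle_triangle (x y z : V) : angle x z ≤ angle x y + angle y z := by
  by_cases hx : x = 0
  · subst hx
    simp only [angle_zero_left]
    linarith [angle_nonneg y z]
  by_cases hz : z = 0
  · subst hz
    simp only [angle_zero_right]
    linarith [angle_nonneg x y]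
  by_cases hy : y = 0
  · subst hy
    simp only [angle_zero_left, angle_zero_right]
    linarith [angle_le_pi x z]
  have hx' : (0:ℝ) < ‖x‖ := norm_pos_iff.2 hx
  have hy' : (0:ℝ) < ‖y‖ := norm_pos_iff.2 hy
  have hz' : (0:ℝ) < ‖z‖ := norm_pos_iff.2 hz
  have h := my_angle_triangle_unit (x := ‖x‖⁻¹ • x) (y := ‖y‖⁻¹ • y) (z := ‖z‖⁻¹ • z)
    (by rw [norm_smul, norm_inv, norm_norm]; exact inv_mul_cancel₀ hx'.ne')
    (by rw [norm_smul, norm_inv, norm_norm]; exact inv_mul_cancel₀ hy'.ne')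
    (by rw [norm_smul, norm_inv, norm_norm]; exact inv_mul_cancel₀ hz'.ne')
  rwa [angle_smul_left_of_pos _ _ (by positivity), angle_smul_right_of_pos _ _ (by positivity),
    angle_smul_left_of_pos _ _ (by positivity), angle_smul_right_of_pos _ _ (by positivity),
    angle_smul_left_of_pos _ _ (by positivity), angle_smul_right_of_pos _ _ (by positivity)]
    at h

lemma my_angle_chain (v : ℕ → V) (h0 : v 0 ≠ 0) :
    ∀ j, angle (v 0) (v j) ≤ ∑ i ∈ Finset.range j, angle (v i) (v (i + 1)) := by
  intro j
  induction j with
  | zero => simp [angle_self h0]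
  | succ j ih =>
    rw [Finset.sum_range_succ]
    calc angle (v 0) (v (j + 1)) ≤ angle (v 0) (v j) + angle (v j) (v (j + 1)) :=
          my_angle_triangle _ _ _
      _ ≤ _ := by linarith

lemma my_prefix_bound (v : ℕ → V) (r : ℕ) (h0 : v 0 ≠ 0)
    (hang : ∀ i < r, angle (v 0) (v i) ≤ Real.pi / 3) :
    ∑ i ∈ Finset.range r, ‖v i‖ ≤ 2 * ‖∑ i ∈ Finset.range r, v i‖ := by
  have key : ∀ i ∈ Finset.range r, ‖v 0‖ * ‖v i‖ ≤ 2 * ⟪v 0, v i⟫ := by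
    intro i hi
    rw [Finset.mem_range] at hi
    have hc := cos_angle_mul_norm_mul_norm (v 0) (v i)
    have hcc : Real.cos (Real.pi / 3) ≤ Real.cos (angle (v 0) (v i)) :=
      Real.cos_le_cos_of_nonneg_of_le_pi (angle_nonneg _ _)
        (by linarith [Real.pi_pos]) (hang i hi)
    rw [Real.cos_pi_div_three] at hcc
    nlinarith [mul_nonneg (mul_nonneg (norm_nonneg (v 0)) (norm_nonneg (v i)))
      (sub_nonneg.2 hcc)]
  have h1 : ‖v 0‖ * ∑ i ∈ Finset.range r, ‖v i‖
      ≤ 2 * ⟪v 0, ∑ i ∈ Finset.range r, v i⟫ := by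
    calc ‖v 0‖ * ∑ i ∈ Finset.range r, ‖v i‖
        = ∑ i ∈ Finset.range r, ‖v 0‖ * ‖v i‖ := Finset.mul_sum _ _ _
      _ ≤ ∑ i ∈ Finset.range r, 2 * ⟪v 0, v i⟫ := Finset.sum_le_sum key
      _ = 2 * ⟪v 0, ∑ i ∈ Finset.range r, v i⟫ := by rw [inner_sum, Finset.mul_sum]
  have h2 : (⟪v 0, ∑ i ∈ Finset.range r, v i⟫ : ℝ)
      ≤ ‖v 0‖ * ‖∑ i ∈ Finset.range r, v i‖ := real_inner_le_norm _ _
  have h3 : (0:ℝ) < ‖v 0‖ := norm_pos_iff.2 h0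
  refine le_of_mul_le_mul_left ?_ h3
  nlinarith

lemma my_chain_bound {D : ℝ} (hD : 0 ≤ D) :
    ∀ m : ℕ, ∀ v : ℕ → V, (∀ i < m, v i ≠ 0) →
      (∀ a b : ℕ, a ≤ b → b ≤ m → ‖∑ i ∈ Finset.Ico a b, v i‖ ≤ D) →
      ∑ i ∈ Finset.range m, ‖v i‖ ≤
        2 * D + 6 / Real.pi * D * ∑ i ∈ Finset.range (m - 1), angle (v i) (v (i + 1)) := by
  intro m
  induction m using Nat.strong_induction_on with
  | _ m IH =>
    intro v hv hsum
    have hπ := Real.pi_pos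
    have hDn : (0:ℝ) ≤ 6 / Real.pi * D := mul_nonneg (by positivity) hD
    have hTnn : ∀ s : Finset ℕ, (0:ℝ) ≤ ∑ i ∈ s, angle (v i) (v (i + 1)) :=
      fun s => Finset.sum_nonneg fun i _ => angle_nonneg _ _
    rcases Nat.eq_zero_or_pos m with rfl | hm
    · simp only [Finset.range_zero, Finset.sum_empty]
      have h6 : (0:ℝ) ≤ 6 / Real.pi * D * ∑ i ∈ Finset.range (0 - 1), angle (v i) (v (i + 1)) :=
        mul_nonneg hDn (hTnn _)
      linarith
    have h0 : v 0 ≠ 0 := hv 0 hm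
    by_cases hcase : ∑ i ∈ Finset.range (m - 1), angle (v i) (v (i + 1)) ≤ Real.pi / 3
    · have hall : ∀ i < m, angle (v 0) (v i) ≤ Real.pi / 3 := by
        intro i hi
        refine (my_angle_chain v h0 i).trans (le_trans ?_ hcase)
        exact Finset.sum_le_sum_of_subset_of_nonneg
          (Finset.range_subset_range.2 (by omega)) (fun j _ _ => angle_nonneg _ _)
      have hp := my_prefix_bound v m h0 hall
      have hb : ‖∑ i ∈ Finset.range m, v i‖ ≤ D := by
        have := hsum 0 m (Nat.zero_le _) le_rfl
        rwa [Finset.range_eq_Ico]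
      have h6 : (0:ℝ) ≤ 6 / Real.pi * D * ∑ i ∈ Finset.range (m - 1), angle (v i) (v (i + 1)) :=
        mul_nonneg hDn (hTnn _)
      linarith
    · push_neg at hcase
      have hfind : ∃ j, Real.pi / 3 < ∑ i ∈ Finset.range j, angle (v i) (v (i + 1)) :=
        ⟨m - 1, hcase⟩
      classical
      set k := Nat.find hfind with hk
      have hk1 : Real.pi / 3 < ∑ i ∈ Finset.range k, angle (v i) (v (i + 1)) :=
        Nat.find_spec hfind
      have hkmin : ∀ j < k, ∑ i ∈ Finset.range j, angle (v i) (v (i + 1)) ≤ Real.pi / 3 :=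
        fun j hj => not_lt.1 (Nat.find_min hfind hj)
      have hkpos : 0 < k := by
        rcases Nat.eq_zero_or_pos k with h | h
        · exfalso; rw [h] at hk1; simp at hk1; linarith
        · exact h
      have hkle : k ≤ m - 1 := Nat.find_min' hfind hcase
      have hpre : ∑ i ∈ Finset.range k, ‖v i‖ ≤ 2 * D := by
        have hall : ∀ i < k, angle (v 0) (v i) ≤ Real.pi / 3 :=
          fun i hi => (my_angle_chain v h0 i).trans (hkmin i hi)
        have hp := my_prefix_bound v k h0 hall
        have hb : ‖∑ i ∈ Finset.range k, v i‖ ≤ D := by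
          have := hsum 0 k (Nat.zero_le _) (by omega)
          rwa [Finset.range_eq_Ico]
        linarith
      have hsuf := IH (m - k) (by omega) (fun i => v (k + i))
        (fun i hi => hv (k + i) (by omega))
        (fun a b hab hbm => by
          have h1 : ∑ i ∈ Finset.Ico a b, v (k + i)
              = ∑ i ∈ Finset.Ico (k + a) (k + b), v i := by
            rw [Finset.sum_Ico_eq_sum_range, Finset.sum_Ico_eq_sum_range]
            have he : k + b - (k + a) = b - a := by omega
            rw [he]
            exact Finset.sum_congr rfl fun i _ => by rw [← add_assoc]
          rw [h1]
          exact hsum (k + a) (k + b) (by omega) (by omega))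
      simp only [← add_assoc] at hsuf
      have hsplit : ∑ i ∈ Finset.range m, ‖v i‖
          = ∑ i ∈ Finset.range k, ‖v i‖ + ∑ i ∈ Finset.range (m - k), ‖v (k + i)‖ := by
        rw [← Finset.sum_range_add_sum_Ico _ (by omega : k ≤ m), Finset.sum_Ico_eq_sum_range]
      have hangsplit : ∑ i ∈ Finset.range (m - 1), angle (v i) (v (i + 1))
          = ∑ i ∈ Finset.range k, angle (v i) (v (i + 1))
            + ∑ i ∈ Finset.range (m - k - 1), angle (v (k + i)) (v (k + i + 1)) := by
        rw [← Finset.sum_range_add_sum_Ico _ (by omega : k ≤ m - 1),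
          Finset.sum_Ico_eq_sum_range]
        have he : m - 1 - k = m - k - 1 := by omega
        rw [he]
      have h2D : 2 * D ≤ 6 / Real.pi * D * ∑ i ∈ Finset.range k, angle (v i) (v (i + 1)) := by
        have h1 : 6 / Real.pi * D * (Real.pi / 3)
            ≤ 6 / Real.pi * D * ∑ i ∈ Finset.range k, angle (v i) (v (i + 1)) :=
          mul_le_mul_of_nonneg_left hk1.le hDn
        have h2 : 6 / Real.pi * D * (Real.pi / 3) = 2 * D := by field_simp; ring
        linarith
      have hsufang : (0:ℝ) ≤ ∑ i ∈ Finset.range (m - k - 1), angle (v (k + i)) (v (k + i + 1)) :=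
        Finset.sum_nonneg fun i _ => angle_nonneg _ _
      rw [hsplit, hangsplit]
      have hdistrib : 6 / Real.pi * D *
            (∑ i ∈ Finset.range k, angle (v i) (v (i + 1))
              + ∑ i ∈ Finset.range (m - k - 1), angle (v (k + i)) (v (k + i + 1)))
          = 6 / Real.pi * D * ∑ i ∈ Finset.range k, angle (v i) (v (i + 1))
            + 6 / Real.pi * D * ∑ i ∈ Finset.range (m - k - 1), angle (v (k + i)) (v (k + i + 1)) := by
        ring
      rw [hdistrib]
      linarith

end AuxLemmas

/-- A compact connected closed curve `Γ` in `ℝ^N` of finite total curvature has finite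
length; quantitatively there is a constant `c_N > 0` depending only on the dimension `N`
such that `c_N · Length(Γ) ≤ diam(Γ) · TotalCurvature(Γ)` for every such curve.
The curve is parametrized by a continuous period-one map `γ : ℝ → ℝ^N`, its length is the
variation of `γ` over one period, and the inequality is stated in `ℝ≥0∞` so that it
includes the finiteness of the length. -/
theorem length_le_diam_mul_totalCurvature (N : ℕ) :
    ∃ c : ℝ, 0 < c ∧
      ∀ γ : ℝ → EuclideanSpace ℝ (Fin N), Continuous γ → (∀ t, γ (t + 1) = γ t) →
        BddAbove (closedPolySums γ) →
        ENNReal.ofReal c * eVariationOn γ (Set.Icc 0 1) ≤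
          ENNReal.ofReal (Metric.diam (Set.range γ) * closedTotalCurvature γ) := by
  refine ⟨Real.pi / 12, by positivity, ?_⟩
  intro γ hγ hper hbdd
  have hπ := Real.pi_pos
  set D := Metric.diam (Set.range γ) with hDdef
  set K := closedTotalCurvature γ with hKdef
  have hperiodic : Function.Periodic γ 1 := hper
  have hbd : Bornology.IsBounded (Set.range γ) := by
    have hcomp : IsCompact (γ '' Set.Icc 0 1) := isCompact_Icc.image hγ
    refine hcomp.isBounded.subset ?_
    rintro _ ⟨t, rfl⟩
    refine ⟨Int.fract t, ⟨Int.fract_nonneg t, (Int.fract_lt_one t).le⟩, ?_⟩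
    have h := hperiodic.sub_int_mul_eq (x := t) ⌊t⌋
    rw [mul_one] at h
    exact h
  have hD0 : 0 ≤ D := Metric.diam_nonneg
  have hdist : ∀ s t : ℝ, dist (γ s) (γ t) ≤ D :=
    fun s t => Metric.dist_le_diam_of_mem hbd ⟨s, rfl⟩ ⟨t, rfl⟩
  have hmem0 : Real.pi / 2 ∈ closedPolySums γ := by
    refine ⟨0, fun _ => 0, ?_, by norm_num, ?_⟩
    · intro a b hab
      exfalso
      have ha := a.isLt
      have hb := b.isLt
      rw [Fin.lt_def] at hab
      omega
    simp [closedPolySum]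
  have hK2 : Real.pi / 2 ≤ K := le_csSup hbdd hmem0
  have key : ∀ n : ℕ, ∀ u : ℕ → ℝ, Monotone u → (∀ i, u i ∈ Set.Icc (0:ℝ) 1) →
      ∑ i ∈ Finset.range n, dist (γ (u (i + 1))) (γ (u i))
        ≤ 2 * D + 6 / Real.pi * D * K := by
    intro n
    induction n using Nat.strong_induction_on with
    | _ n IH =>
      intro u hu hus
      by_cases hdup : ∃ i < n, γ (u (i + 1)) = γ (u i)
      · obtain ⟨i, hin, heq⟩ := hdup
        have hn1 : n - 1 < n := by omega
        set u' : ℕ → ℝ := fun j => u (if j ≤ i then j else j + 1) with hu'def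
        have hmono' : Monotone u' := by
          intro a b hab
          have h : (if a ≤ i then a else a + 1) ≤ (if b ≤ i then b else b + 1) := by
            split_ifs <;> omega
          exact hu h
        have hres := IH (n - 1) hn1 u' hmono' (fun j => hus _)
        refine le_trans (le_of_eq ?_) hres
        have e_lt : ∀ j < i, dist (γ (u' (j + 1))) (γ (u' j))
            = dist (γ (u (j + 1))) (γ (u j)) := by
          intro j hj
          have h1 : u' j = u j := by simp only [hu'def]; rw [if_pos (by omega)]
          have h2 : u' (j + 1) = u (j + 1) := by simp only [hu'def]; rw [if_pos (by omega)]
          rw [h1, h2]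
        have e_ge : ∀ j, i ≤ j → dist (γ (u' (j + 1))) (γ (u' j))
            = dist (γ (u (j + 2))) (γ (u (j + 1))) := by
          intro j hj
          have h2 : u' (j + 1) = u (j + 2) := by simp only [hu'def]; rw [if_neg (by omega)]
          by_cases hji : j = i
          · subst hji
            have h1 : u' j = u j := by simp only [hu'def]; rw [if_pos le_rfl]
            rw [h1, h2, ← heq]
          · have h1 : u' j = u (j + 1) := by simp only [hu'def]; rw [if_neg (by omega)]
            rw [h1, h2]
        calc ∑ j ∈ Finset.range n, dist (γ (u (j + 1))) (γ (u j))
            = ∑ j ∈ Finset.range i, dist (γ (u (j + 1))) (γ (u j))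
              + ∑ j ∈ Finset.Ico i n, dist (γ (u (j + 1))) (γ (u j)) :=
              (Finset.sum_range_add_sum_Ico _ (by omega)).symm
          _ = ∑ j ∈ Finset.range i, dist (γ (u (j + 1))) (γ (u j))
              + (0 + ∑ j ∈ Finset.Ico (i + 1) n, dist (γ (u (j + 1))) (γ (u j))) := by
              rw [Finset.sum_eq_sum_Ico_succ_bot hin, heq, dist_self]
          _ = ∑ j ∈ Finset.range i, dist (γ (u' (j + 1))) (γ (u' j))
              + ∑ j ∈ Finset.Ico i (n - 1), dist (γ (u' (j + 1))) (γ (u' j)) := by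
              rw [zero_add]
              congr 1
              · exact Finset.sum_congr rfl fun j hj =>
                  (e_lt j (Finset.mem_range.1 hj)).symm
              · rw [Finset.sum_Ico_eq_sum_range, Finset.sum_Ico_eq_sum_range]
                have he : n - (i + 1) = n - 1 - i := by omega
                rw [he]
                refine Finset.sum_congr rfl fun j hj => ?_
                rw [e_ge (i + j) (by omega)]
                have h1 : i + 1 + j + 1 = i + j + 2 := by omega
                have h2 : i + 1 + j = i + j + 1 := by omega
                rw [h1, h2]
          _ = ∑ j ∈ Finset.range (n - 1), dist (γ (u' (j + 1))) (γ (u' j)) :=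
              Finset.sum_range_add_sum_Ico _ (by omega)
      · push_neg at hdup
        rcases Nat.eq_zero_or_pos n with rfl | hn
        · simp only [Finset.range_zero, Finset.sum_empty]
          have h1 : (0:ℝ) ≤ 6 / Real.pi * D * K :=
            mul_nonneg (mul_nonneg (by positivity) hD0) (by linarith)
          linarith
        set v : ℕ → EuclideanSpace ℝ (Fin N) := fun j => γ (u (j + 1)) - γ (u j) with hvdef
        have hvne : ∀ j < n, v j ≠ 0 := fun j hj => sub_ne_zero.2 (hdup j hj)
        have hustrict : ∀ a b : ℕ, a < b → b ≤ n → u a < u b := by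
          intro a b hab hbn
          have h1 : u a < u (a + 1) := by
            rcases lt_or_eq_of_le (hu (Nat.le_succ a)) with h | h
            · exact h
            · exact absurd (by rw [← h]) (hdup a (by omega))
          exact h1.trans_le (hu hab)
        have htel : ∀ a b : ℕ, a ≤ b → ∑ j ∈ Finset.Ico a b, v j = γ (u b) - γ (u a) := by
          intro a b hab
          rw [Finset.sum_Ico_eq_sum_range]
          have h1 : ∑ j ∈ Finset.range (b - a), v (a + j)
              = (fun j => γ (u (a + j))) (b - a) - (fun j => γ (u (a + j))) 0 :=
            Finset.sum_range_sub (fun j => γ (u (a + j))) (b - a)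
          rw [h1]
          simp only []
          have h2 : a + (b - a) = b := by omega
          rw [h2, Nat.add_zero]
        have hbound : ∀ a b : ℕ, a ≤ b → b ≤ n → ‖∑ j ∈ Finset.Ico a b, v j‖ ≤ D := by
          intro a b hab hbn
          rw [htel a b hab, ← dist_eq_norm]
          exact hdist _ _
        have hchain := my_chain_bound hD0 n v hvne hbound
        have hdist_eq : ∑ j ∈ Finset.range n, dist (γ (u (j + 1))) (γ (u j))
            = ∑ j ∈ Finset.range n, ‖v j‖ :=
          Finset.sum_congr rfl fun j _ => dist_eq_norm _ _
        have hu0 : 0 ≤ u 0 := (hus 0).1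
        have hun : u n ≤ 1 := (hus n).2
        have hT : ∑ j ∈ Finset.range (n - 1), InnerProductGeometry.angle (v j) (v (j + 1)) ≤ K := by
          by_cases hwrap : u n < u 0 + 1
          · have hmem : closedPolySum γ (fun i : Fin (n + 1) => u i.val) ∈ closedPolySums γ := by
              refine ⟨n, _, ?_, ?_, rfl⟩
              · intro a b hab
                exact hustrict a.val b.val hab (Nat.lt_succ_iff.1 b.isLt)
              · simpa using hwrap
            refine le_trans ?_ (le_csSup hbdd hmem)
            have hval1 : ∀ i : Fin (n + 1), ((i + 1 : Fin (n + 1))).val = (i.val + 1) % (n + 1) := by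
              intro i
              rw [Fin.val_add, Fin.val_one']
              conv_rhs => rw [Nat.add_mod, Nat.mod_eq_of_lt i.isLt]
            have hval2 : ∀ i : Fin (n + 1),
                ((i + 1 + 1 : Fin (n + 1))).val = (i.val + 2) % (n + 1) := by
              intro i
              rw [hval1 (i + 1), hval1 i, Nat.mod_add_mod]
            have hconv : closedPolySum γ (fun i : Fin (n + 1) => u i.val)
                = ∑ j ∈ Finset.range (n + 1),
                    InnerProductGeometry.angle
                      (γ (u ((j + 1) % (n + 1))) - γ (u (j % (n + 1))))
                      (γ (u ((j + 2) % (n + 1))) - γ (u ((j + 1) % (n + 1)))) := by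
              rw [closedPolySum, ← Fin.sum_univ_eq_sum_range (fun j =>
                    InnerProductGeometry.angle
                      (γ (u ((j + 1) % (n + 1))) - γ (u (j % (n + 1))))
                      (γ (u ((j + 2) % (n + 1))) - γ (u ((j + 1) % (n + 1))))) (n + 1)]
              refine Finset.sum_congr rfl fun i _ => ?_
              rw [hval1 i, hval2 i, Nat.mod_eq_of_lt i.isLt]
            rw [hconv]
            have hstep : ∀ j ∈ Finset.range (n - 1),
                InnerProductGeometry.angle (v j) (v (j + 1)) =
                  InnerProductGeometry.angle
                    (γ (u ((j + 1) % (n + 1))) - γ (u (j % (n + 1))))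
                    (γ (u ((j + 2) % (n + 1))) - γ (u ((j + 1) % (n + 1)))) := by
              intro j hj
              rw [Finset.mem_range] at hj
              have e0 : j % (n + 1) = j := Nat.mod_eq_of_lt (by omega)
              have e1 : (j + 1) % (n + 1) = j + 1 := Nat.mod_eq_of_lt (by omega)
              have e2 : (j + 2) % (n + 1) = j + 2 := Nat.mod_eq_of_lt (by omega)
              rw [e0, e1, e2]
            rw [Finset.sum_congr rfl hstep]
            exact Finset.sum_le_sum_of_subset_of_nonneg
              (Finset.range_subset_range.2 (by omega))
              (fun j _ _ => InnerProductGeometry.angle_nonneg _ _)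
          · push_neg at hwrap
            have h0eq : u 0 = 0 := le_antisymm (by linarith) hu0
            have h1eq : u n = 1 := le_antisymm hun (by linarith)
            obtain ⟨m, rfl⟩ : ∃ m, n = m + 1 := ⟨n - 1, by omega⟩
            have hmem : closedPolySum γ (fun i : Fin (m + 1) => u i.val) ∈ closedPolySums γ := by
              refine ⟨m, _, ?_, ?_, rfl⟩
              · intro a b hab
                exact hustrict a.val b.val hab (le_trans (Nat.lt_succ_iff.1 b.isLt) (by omega))
              · simp only [Fin.val_last, Fin.val_zero]
                have hlast : u m < u (m + 1) := hustrict m (m + 1) (by omega) le_rfl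
                rw [h0eq]
                rw [h1eq] at hlast
                linarith
            refine le_trans ?_ (le_csSup hbdd hmem)
            have hval1 : ∀ i : Fin (m + 1), ((i + 1 : Fin (m + 1))).val = (i.val + 1) % (m + 1) := by
              intro i
              rw [Fin.val_add, Fin.val_one']
              conv_rhs => rw [Nat.add_mod, Nat.mod_eq_of_lt i.isLt]
            have hval2 : ∀ i : Fin (m + 1),
                ((i + 1 + 1 : Fin (m + 1))).val = (i.val + 2) % (m + 1) := by
              intro i
              rw [hval1 (i + 1), hval1 i, Nat.mod_add_mod]
            have hconv : closedPolySum γ (fun i : Fin (m + 1) => u i.val)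
                = ∑ j ∈ Finset.range (m + 1),
                    InnerProductGeometry.angle
                      (γ (u ((j + 1) % (m + 1))) - γ (u (j % (m + 1))))
                      (γ (u ((j + 2) % (m + 1))) - γ (u ((j + 1) % (m + 1)))) := by
              rw [closedPolySum, ← Fin.sum_univ_eq_sum_range (fun j =>
                    InnerProductGeometry.angle
                      (γ (u ((j + 1) % (m + 1))) - γ (u (j % (m + 1))))
                      (γ (u ((j + 2) % (m + 1))) - γ (u ((j + 1) % (m + 1))))) (m + 1)]
              refine Finset.sum_congr rfl fun i _ => ?_
              rw [hval1 i, hval2 i, Nat.mod_eq_of_lt i.isLt]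
            rw [hconv]
            have hstep : ∀ j ∈ Finset.range (m + 1 - 1),
                InnerProductGeometry.angle (v j) (v (j + 1)) =
                  InnerProductGeometry.angle
                    (γ (u ((j + 1) % (m + 1))) - γ (u (j % (m + 1))))
                    (γ (u ((j + 2) % (m + 1))) - γ (u ((j + 1) % (m + 1)))) := by
              intro j hj
              rw [Finset.mem_range] at hj
              have e0 : j % (m + 1) = j := Nat.mod_eq_of_lt (by omega)
              have e1 : (j + 1) % (m + 1) = j + 1 := Nat.mod_eq_of_lt (by omega)
              rw [e0, e1]
              by_cases hj2 : j + 2 ≤ m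
              · have e2 : (j + 2) % (m + 1) = j + 2 := Nat.mod_eq_of_lt (by omega)
                rw [e2]
              · have hjm : j + 2 = m + 1 := by omega
                rw [hjm, Nat.mod_self]
                have hγ0 : γ (u 0) = γ (u (m + 1)) := by
                  rw [h0eq, h1eq]
                  have h := hper 0
                  rw [zero_add] at h
                  exact h.symm
                rw [hγ0, ← hjm]
            rw [Finset.sum_congr rfl hstep]
            exact Finset.sum_le_sum_of_subset_of_nonneg
              (Finset.range_subset_range.2 (by omega))
              (fun j _ _ => InnerProductGeometry.angle_nonneg _ _)
        rw [hdist_eq]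
        refine hchain.trans ?_
        have hmul := mul_le_mul_of_nonneg_left hT
          (mul_nonneg (by positivity : (0:ℝ) ≤ 6 / Real.pi) hD0)
        linarith
  have hEvar : eVariationOn γ (Set.Icc 0 1) ≤ ENNReal.ofReal (2 * D + 6 / Real.pi * D * K) := by
    rw [eVariationOn]
    apply iSup_le
    rintro ⟨n, u, hu, hus⟩
    calc ∑ i ∈ Finset.range n, edist (γ (u (i + 1))) (γ (u i))
        = ENNReal.ofReal (∑ i ∈ Finset.range n, dist (γ (u (i + 1))) (γ (u i))) := by
          rw [ENNReal.ofReal_sum_of_nonneg (fun i _ => dist_nonneg)]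
          exact Finset.sum_congr rfl fun i _ => edist_dist _ _
      _ ≤ ENNReal.ofReal (2 * D + 6 / Real.pi * D * K) :=
          ENNReal.ofReal_le_ofReal (key n u hu hus)
  calc ENNReal.ofReal (Real.pi / 12) * eVariationOn γ (Set.Icc 0 1)
      ≤ ENNReal.ofReal (Real.pi / 12) * ENNReal.ofReal (2 * D + 6 / Real.pi * D * K) :=
        mul_le_mul_right hEvar _
    _ = ENNReal.ofReal (Real.pi / 12 * (2 * D + 6 / Real.pi * D * K)) :=
        (ENNReal.ofReal_mul (by positivity)).symm
    _ ≤ ENNReal.ofReal (D * K) := by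
        apply ENNReal.ofReal_le_ofReal
        have he : Real.pi / 12 * (2 * D + 6 / Real.pi * D * K)
            = Real.pi / 6 * D + 1 / 2 * (D * K) := by
          field_simp
          ring
        rw [he]
        nlinarith [mul_le_mul_of_nonneg_left hK2 hD0, mul_nonneg hD0 Real.pi_pos.le]
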